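/- For α ∈ (0,1], ν ∈ (0,1], λ > 0, t > 0, and k ≥ 0, the k-th power series coefficient in u of E_ν(-λ^α t^ν (1-u)^α) equals ((-1)^k/k!) ∑_{r=0}^∞ ((-λ^α t^ν)^r / Γ(νr+1)) · Γ(αr+1)/Γ(αr+1-k). -/

import Mathlib

open Real Filter Finset

/-- Falling factorial product `x(x-1)⋯(x-k+1)`. -/
noncomputable def ph (x : ℝ) (k : ℕ) : ℝ := ∏ i ∈ Finset.range k, (x - i)

/-- Majorant product `(|x|+1)(|x|+2)⋯(|x|+k)`. -/
noncomputable def php (x : ℝ) (k : ℕ) : ℝ := ∏ i ∈ Finset.range k, (|x| + 1 + i)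

lemma ph_zero (x : ℝ) : ph x 0 = 1 := by simp [ph]

lemma ph_succ (x : ℝ) (k : ℕ) : ph x (k + 1) = ph x k * (x - k) := by
  simp [ph, Finset.prod_range_succ]

lemma php_succ (x : ℝ) (k : ℕ) : php x (k + 1) = php x k * (|x| + 1 + k) := by
  simp [php, Finset.prod_range_succ]

lemma php_pos (x : ℝ) (k : ℕ) : 0 < php x k := by
  apply Finset.prod_pos; intro i _; positivity

lemma abs_ph_le (x : ℝ) (k : ℕ) : |ph x k| ≤ php x k := by
  rw [ph, php, Finset.abs_prod]
  apply Finset.prod_le_prod (fun i _ => abs_nonneg _)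
  intro i _
  calc |x - (i:ℝ)| ≤ |x| + |(i:ℝ)| := abs_sub _ _
    _ ≤ |x| + 1 + i := by rw [Nat.abs_cast]; linarith

lemma php_div_factorial_le (x : ℝ) (k : ℕ) :
    php x k / (k.factorial : ℝ) ≤ ((k : ℝ) + 1) ^ (⌈|x|⌉₊ + 1) := by
  set m := ⌈|x|⌉₊ + 1 with hm
  have hxm : |x| + 1 ≤ (m : ℝ) := by
    push_cast [hm]
    have := Nat.le_ceil |x|
    linarith
  induction k with
  | zero => simp [php]
  | succ k ih =>
    have hfac : (0:ℝ) < (k.factorial : ℝ) := by positivity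
    have hk1 : (0:ℝ) < (k:ℝ) + 1 := by positivity
    have hstep : php x (k+1) / ((k+1).factorial : ℝ)
        = php x k / (k.factorial : ℝ) * ((|x| + 1 + k) / ((k:ℝ) + 1)) := by
      have hc : (((k+1).factorial : ℕ) : ℝ) = (k.factorial : ℝ) * ((k:ℝ)+1) := by
        rw [Nat.factorial_succ]; push_cast; ring
      rw [php_succ, hc, mul_div_mul_comm]
    have key : ((k:ℝ)+1) ^ m * (1 + (m:ℝ)/((k:ℝ)+1)) ≤ ((k:ℝ)+1+1) ^ m := by
      have h2 : ((k:ℝ)+1+1) = ((k:ℝ)+1) * (1 + 1/((k:ℝ)+1)) := by field_simp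
      rw [h2, mul_pow]
      have hb := one_add_mul_le_pow (show (-2:ℝ) ≤ 1/((k:ℝ)+1) by linarith [show (0:ℝ) ≤ 1/((k:ℝ)+1) from by positivity]) m
      have : 1 + (m:ℝ)/((k:ℝ)+1) = 1 + (m:ℝ) * (1/((k:ℝ)+1)) := by ring
      rw [this]
      exact mul_le_mul_of_nonneg_left hb (by positivity)
    have h2 : ((k:ℝ)+1)^m * ((|x| + 1 + k)/((k:ℝ)+1)) ≤ ((k:ℝ)+1)^m * (1 + (m:ℝ)/((k:ℝ)+1)) := by
      apply mul_le_mul_of_nonneg_left _ (by positivity)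
      rw [div_le_iff₀ hk1] at *
      have : (1 + (m:ℝ)/((k:ℝ)+1)) * ((k:ℝ)+1) = (k:ℝ) + 1 + m := by field_simp
      rw [this]
      linarith
    have hcast : ((k:ℝ)+1+1) = ((k+1:ℕ):ℝ) + 1 := by push_cast; ring
    calc php x (k+1) / ((k+1).factorial : ℝ)
        = php x k / (k.factorial:ℝ) * ((|x|+1+k)/((k:ℝ)+1)) := hstep
      _ ≤ ((k:ℝ)+1)^m * ((|x|+1+k)/((k:ℝ)+1)) :=
          mul_le_mul_of_nonneg_right ih (by positivity)
      _ ≤ ((k:ℝ)+1)^m * (1 + (m:ℝ)/((k:ℝ)+1)) := h2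
      _ ≤ ((k:ℝ)+1+1)^m := key
      _ = (((k+1:ℕ):ℝ)+1)^m := by rw [hcast]

lemma summable_pow_succ_mul_geom (m : ℕ) {ρ : ℝ} (h0 : 0 < ρ) (h1 : ρ < 1) :
    Summable (fun k : ℕ => ((k:ℝ)+1)^m * ρ^k) := by
  have hg : Summable (fun n : ℕ => (n:ℝ)^m * ρ^n) :=
    summable_pow_mul_geometric_of_norm_lt_one m
      (by rw [Real.norm_eq_abs, abs_of_pos h0]; exact h1)
  have hs : Summable (fun k : ℕ => ((k+1:ℕ):ℝ)^m * ρ^(k+1)) :=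
    (summable_nat_add_iff 1).2 hg
  have hρ' : ρ ≠ 0 := h0.ne'
  have := hs.mul_right (1/ρ)
  apply this.congr
  intro k
  push_cast
  rw [pow_succ]
  field_simp

lemma summable_php_rho (x : ℝ) {ρ : ℝ} (h0 : 0 < ρ) (h1 : ρ < 1) :
    Summable (fun k : ℕ => php x k / (k.factorial : ℝ) * ρ^k) := by
  refine Summable.of_nonneg_of_le (fun k => by have := (php_pos x k).le; positivity)
    (fun k => mul_le_mul_of_nonneg_right (php_div_factorial_le x k) (by positivity))
    (summable_pow_succ_mul_geom (⌈|x|⌉₊ + 1) h0 h1)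

lemma summable_php_deriv (x : ℝ) {ρ : ℝ} (h0 : 0 < ρ) (h1 : ρ < 1) :
    Summable (fun k : ℕ => php x k / (k.factorial : ℝ) * ((k:ℝ) * ρ^(k-1))) := by
  refine Summable.of_nonneg_of_le (fun k => by have := (php_pos x k).le; positivity) (fun k => ?_)
    (((summable_pow_succ_mul_geom (⌈|x|⌉₊ + 2) h0 h1).mul_left (1/ρ)))
  · 
    cases k with
    | zero => simp; positivity
    | succ j =>
      have h1' : php x (j+1) / ((j+1).factorial:ℝ) * (((j+1:ℕ):ℝ) * ρ^((j+1)-1))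
          = (php x (j+1) / ((j+1).factorial:ℝ) * ((j:ℝ)+1)) * ρ^j := by
        push_cast; ring_nf
      rw [h1']
      have h2 : (1/ρ) * ((((j+1:ℕ)):ℝ)+1)^(⌈|x|⌉₊ + 2) * ρ^(j+1)
          = ((((j+1:ℕ)):ℝ)+1)^(⌈|x|⌉₊ + 2) * ρ^j := by
        rw [pow_succ]; field_simp; ring
      have h3 : php x (j+1) / ((j+1).factorial:ℝ) * ((j:ℝ)+1)
          ≤ (((j+1:ℕ):ℝ)+1)^(⌈|x|⌉₊ + 2) := by
        have hb := php_div_factorial_le x (j+1)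
        have : php x (j+1) / ((j+1).factorial:ℝ) * ((j:ℝ)+1)
            ≤ (((j+1:ℕ):ℝ)+1)^(⌈|x|⌉₊+1) * ((j:ℝ)+1) :=
          mul_le_mul_of_nonneg_right hb (by positivity)
        apply this.trans
        rw [pow_succ]
        apply mul_le_mul_of_nonneg_left _ (by positivity)
        push_cast; linarith
      calc php x (j+1) / ((j+1).factorial:ℝ) * ((j:ℝ)+1) * ρ^j
          ≤ (((j+1:ℕ):ℝ)+1)^(⌈|x|⌉₊+2) * ρ^j :=
            mul_le_mul_of_nonneg_right h3 (by positivity)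
        _ = (1/ρ) * ((((j+1:ℕ)):ℝ)+1)^(⌈|x|⌉₊ + 2) * ρ^(j+1) := h2.symm
        _ = (1/ρ) * (((((j+1:ℕ)):ℝ)+1)^(⌈|x|⌉₊ + 2) * ρ^(j+1)) := by ring

lemma hasSum_binomial (x : ℝ) {y : ℝ} (hy : |y| < 1) :
    HasSum (fun k : ℕ => ph x k / (k.factorial : ℝ) * y ^ k) ((1 + y) ^ x) := by
  set ρ : ℝ := (1 + |y|) / 2 with hρdef
  have hy0 : 0 ≤ |y| := abs_nonneg y
  have hρ0 : 0 < ρ := by rw [hρdef]; linarith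
  have hρ1 : ρ < 1 := by rw [hρdef]; linarith
  have hyρ : |y| < ρ := by rw [hρdef]; linarith
  set t : Set ℝ := Set.Ioo (-ρ) ρ with htdef
  have hmem : ∀ z ∈ t, |z| < ρ := by
    intro z hz
    rw [abs_lt]
    exact ⟨hz.1, hz.2⟩
  have hyt : y ∈ t := by
    have := abs_lt.mp hyρ
    exact ⟨this.1, this.2⟩
  have h0t : (0:ℝ) ∈ t := ⟨by linarith, hρ0⟩
  -- bounds on terms
  have hterm : ∀ (k : ℕ), ∀ z ∈ t, |ph x k / (k.factorial:ℝ) * z ^ k|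
      ≤ php x k / (k.factorial:ℝ) * ρ ^ k := by
    intro k z hz
    rw [abs_mul, abs_div, Nat.abs_cast, abs_pow]
    apply mul_le_mul (div_le_div_of_nonneg_right (abs_ph_le x k) (by positivity))
      (pow_le_pow_left₀ (abs_nonneg z) (hmem z hz).le k) (by positivity)
    have := (php_pos x k).le
    positivity
  have hsum_t : ∀ z ∈ t, Summable (fun k : ℕ => ph x k / (k.factorial:ℝ) * z ^ k) := by
    intro z hz
    exact Summable.of_norm_bounded (summable_php_rho x hρ0 hρ1) (fun k => hterm k z hz)
  -- derivative bound
  have hdbound : ∀ (k : ℕ), ∀ z ∈ t,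
      ‖ph x k / (k.factorial:ℝ) * ((k:ℝ) * z ^ (k-1))‖
      ≤ php x k / (k.factorial:ℝ) * ((k:ℝ) * ρ ^ (k-1)) := by
    intro k z hz
    rw [Real.norm_eq_abs, abs_mul, abs_div, Nat.abs_cast, abs_mul, abs_pow, Nat.abs_cast]
    apply mul_le_mul (div_le_div_of_nonneg_right (abs_ph_le x k) (by positivity))
      (mul_le_mul_of_nonneg_left (pow_le_pow_left₀ (abs_nonneg z) (hmem z hz).le _)
        (Nat.cast_nonneg k)) (by positivity)
    have := (php_pos x k).le
    positivity
  -- derivative of each term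
  have hterm_deriv : ∀ (k : ℕ), ∀ z ∈ t,
      HasDerivAt (fun w : ℝ => ph x k / (k.factorial:ℝ) * w ^ k)
        (ph x k / (k.factorial:ℝ) * ((k:ℝ) * z ^ (k-1))) z := by
    intro k z _
    exact (hasDerivAt_pow k z).const_mul _
  -- the sum function
  set g : ℝ → ℝ := fun w => ∑' k : ℕ, ph x k / (k.factorial:ℝ) * w ^ k with hgdef
  have HD : ∀ z ∈ t, HasDerivAt g
      (∑' k : ℕ, ph x k / (k.factorial:ℝ) * ((k:ℝ) * z ^ (k-1))) z := by
    intro z hz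
    exact hasDerivAt_tsum_of_isPreconnected (summable_php_deriv x hρ0 hρ1)
      isOpen_Ioo isPreconnected_Ioo hterm_deriv hdbound h0t (hsum_t 0 h0t) hz
  -- functional equation
  have key : ∀ z ∈ t, (1 + z) * (∑' k : ℕ, ph x k / (k.factorial:ℝ) * ((k:ℝ) * z ^ (k-1)))
      = x * g z := by
    intro z hz
    have hS : Summable (fun k : ℕ => ph x k / (k.factorial:ℝ) * ((k:ℝ) * z ^ (k-1))) :=
      Summable.of_norm_bounded (summable_php_deriv x hρ0 hρ1) (fun k => hdbound k z hz)
    set D : ℝ := ∑' k : ℕ, ph x k / (k.factorial:ℝ) * ((k:ℝ) * z ^ (k-1)) with hDdef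
    -- part 1 : z * D = ∑' ph * k * z^k
    have hzD : z * D = ∑' k : ℕ, ph x k / (k.factorial:ℝ) * ((k:ℝ) * z ^ k) := by
      rw [hDdef, ← tsum_mul_left]
      apply tsum_congr
      intro k
      cases k with
      | zero => simp
      | succ j =>
        have : (j+1) - 1 = j := rfl
        rw [this, pow_succ]
        ring
    have hSk : Summable (fun k : ℕ => ph x k / (k.factorial:ℝ) * ((k:ℝ) * z ^ k)) := by
      apply (hS.mul_left z).congr
      intro k
      cases k with
      | zero => simp
      | succ j =>
        have : (j+1) - 1 = j := rfl
        rw [this, pow_succ]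
        ring
    -- part 2 : shift
    have hshift : D = ∑' k : ℕ, ph x k / (k.factorial:ℝ) * ((x - k) * z ^ k) := by
      rw [hDdef, Summable.tsum_eq_zero_add hS]
      simp only [Nat.cast_zero, zero_mul, mul_zero, zero_add, Nat.cast_ofNat]
      apply tsum_congr
      intro k
      have h1 : (k+1) - 1 = k := rfl
      have h2 : ((k+1).factorial : ℝ) = (k.factorial:ℝ) * ((k:ℝ)+1) := by
        rw [Nat.factorial_succ]; push_cast; ring
      rw [h1, ph_succ, h2]
      have hk1 : ((k:ℝ)+1) ≠ 0 := by positivity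
      have hkf : (k.factorial:ℝ) ≠ 0 := by positivity
      push_cast
      field_simp
    have hSsh : Summable (fun k : ℕ => ph x k / (k.factorial:ℝ) * ((x - k) * z ^ k)) := by
      apply (((hsum_t z hz).mul_left x).sub hSk).congr
      intro k
      ring
    calc (1 + z) * D = D + z * D := by ring
      _ = ∑' k : ℕ, (ph x k / (k.factorial:ℝ) * ((x - k) * z ^ k)
            + ph x k / (k.factorial:ℝ) * ((k:ℝ) * z ^ k)) := by
          rw [hzD, hshift]
          exact (Summable.tsum_add hSsh hSk).symm
      _ = ∑' k : ℕ, x * (ph x k / (k.factorial:ℝ) * z ^ k) := tsum_congr (fun k => by ring)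
      _ = x * g z := tsum_mul_left
  -- the quotient function is constant
  set h : ℝ → ℝ := fun w => g w * (1 + w) ^ (-x) with hhdef
  have hsub : ∀ z ∈ t, 0 < 1 + z := by
    intro z hz
    have := hz.1
    have : -1 < z := by linarith
    linarith
  have hD0 : ∀ z ∈ t, HasDerivAt h 0 z := by
    intro z hz
    have h1z : 0 < 1 + z := hsub z hz
    have Hg := HD z hz
    have Hr : HasDerivAt (fun w : ℝ => (1 + w) ^ (-x)) (1 * (-x) * (1 + z) ^ (-x - 1)) z :=
      HasDerivAt.rpow_const ((hasDerivAt_id z).const_add 1) (Or.inl h1z.ne')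
    have Hmul := Hg.mul Hr
    have heq : (∑' k : ℕ, ph x k / (k.factorial:ℝ) * ((k:ℝ) * z ^ (k-1))) * (1 + z) ^ (-x)
        + g z * (1 * (-x) * (1 + z) ^ (-x - 1)) = 0 := by
      have hr1 : (1 + z) ^ (-x) = (1 + z) ^ (-x - 1) * (1 + z) := by
        rw [← Real.rpow_add_one h1z.ne' (-x-1)]
        norm_num
      rw [hr1]
      have hk := key z hz
      linear_combination (1 + z) ^ (-x - 1) * hk
    rw [heq] at Hmul
    exact Hmul
  -- h is constant on t : h y = h 0
  have hconst : h y = h 0 := by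
    rcases le_total 0 y with hy0' | hy0'
    · have hsub2 : Set.Icc (0:ℝ) y ⊆ t := by
        intro w hw
        exact ⟨by have := hw.1; linarith, lt_of_le_of_lt hw.2 hyt.2⟩
      have := constant_of_has_deriv_right_zero
        (f := h) (a := 0) (b := y)
        (fun w hw => ((hD0 w (hsub2 hw)).continuousAt).continuousWithinAt)
        (fun w hw => ((hD0 w (hsub2 ⟨hw.1, hw.2.le⟩)).hasDerivWithinAt))
        y (Set.right_mem_Icc.mpr hy0')
      exact this
    · have hsub2 : Set.Icc y (0:ℝ) ⊆ t := by
        intro w hw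
        exact ⟨lt_of_lt_of_le hyt.1 hw.1, by have := hw.2; linarith⟩
      have := constant_of_has_deriv_right_zero
        (f := h) (a := y) (b := 0)
        (fun w hw => ((hD0 w (hsub2 hw)).continuousAt).continuousWithinAt)
        (fun w hw => ((hD0 w (hsub2 ⟨hw.1, hw.2.le⟩)).hasDerivWithinAt))
        0 (Set.right_mem_Icc.mpr hy0')
      exact this.symm
  -- value at 0
  have hg0 : g 0 = 1 := by
    have he : g 0 = ∑' k : ℕ, ph x k / (k.factorial:ℝ) * (0:ℝ) ^ k := rfl
    rw [he, tsum_eq_single 0 (fun k hk => by simp [zero_pow hk])]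
    simp [ph_zero]
  have hh0 : h 0 = 1 := by
    have he : h 0 = g 0 * (1 + 0:ℝ) ^ (-x) := rfl
    rw [he, hg0]
    norm_num
  -- conclude
  have h1y : 0 < 1 + y := hsub y hyt
  have hgy : g y = (1 + y) ^ x := by
    have h1 : g y * (1 + y) ^ (-x) = 1 := hconst.trans hh0
    have h2 : (1 + y) ^ (-x) = ((1 + y) ^ x)⁻¹ := Real.rpow_neg h1y.le x
    rw [h2] at h1
    have h3 : (1 + y) ^ x ≠ 0 := (Real.rpow_pos_of_pos h1y x).ne'
    field_simp at h1
    exact h1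
  have := (hsum_t y hyt).hasSum
  rw [show (∑' k : ℕ, ph x k / (k.factorial:ℝ) * y ^ k) = g y from rfl, hgy] at this
  exact this

lemma gamma_ratio {x : ℝ} (hx : Real.Gamma (x + 1) ≠ 0) (k : ℕ) :
    Real.Gamma (x + 1) / Real.Gamma (x + 1 - k) = ph x k := by
  induction k with
  | zero => simp [ph_zero, div_self hx]
  | succ k ih =>
    have hc : x + 1 - ((k+1:ℕ):ℝ) = x - k := by push_cast; ring
    have hc2 : x + 1 - (k:ℕ) = (x - k) + 1 := by push_cast; ring
    rw [ph_succ, hc]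
    by_cases hxk : x - (k:ℝ) = 0
    · rw [hxk, Real.Gamma_zero, div_zero, mul_zero]
    · have hG : Real.Gamma (x + 1 - k) = (x - k) * Real.Gamma (x - k) := by
        rw [hc2, Real.Gamma_add_one hxk]
      by_cases hG0 : Real.Gamma (x - k) = 0
      · rw [hG0, div_zero]
        rw [hc2, Real.Gamma_add_one hxk, hG0, mul_zero, div_zero] at ih
        rw [← ih, zero_mul]
      · rw [hG] at ih
        rw [← ih]
        field_simp
  
lemma summable_ml {ν : ℝ} (hν : 0 < ν) {C : ℝ} (hC : 0 ≤ C) :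
    Summable (fun r : ℕ => C ^ r / Real.Gamma (ν * r + 1)) := by
  set D : ℝ := C + 1 with hD
  have hD1 : (1:ℝ) ≤ D := by rw [hD]; linarith
  set E : ℝ := max 1 (D ^ (1/ν)) with hE
  have hE1 : (1:ℝ) ≤ E := le_max_left _ _
  -- eventually (E^2)^n ≤ n!
  have hfac : ∀ᶠ n : ℕ in atTop, (E^2)^n ≤ (n.factorial : ℝ) := by
    have hs := summable_pow_div_factorial (E^2)
    have ht := hs.tendsto_atTop_zero
    have : ∀ᶠ n : ℕ in atTop, (E^2)^n / (n.factorial:ℝ) < 1 :=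
      ht.eventually (gt_mem_nhds one_pos)
    filter_upwards [this] with n hn
    have hf : (0:ℝ) < (n.factorial:ℝ) := by positivity
    rw [div_lt_one hf] at hn
    exact hn.le
  -- the floor function tends to infinity
  have hfloor : Tendsto (fun r : ℕ => ⌊ν * r⌋₊) atTop atTop := by
    apply tendsto_nat_floor_atTop.comp
    exact Tendsto.const_mul_atTop hν tendsto_natCast_atTop_atTop
  -- eventual bound on Gamma
  have hgb : ∀ᶠ r : ℕ in atTop, D ^ r ≤ Real.Gamma (ν * r + 1) := by
    have hQ : ∀ᶠ n : ℕ in atTop, 3 ≤ n ∧ (E^2)^(n-1) ≤ ((n-1).factorial : ℝ) := by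
      have h1 : ∀ᶠ n : ℕ in atTop, (E^2)^(n-1) ≤ ((n-1).factorial : ℝ) :=
        (tendsto_sub_atTop_nat 1).eventually hfac
      filter_upwards [h1, eventually_ge_atTop 3] with n h1 h2
      exact ⟨h2, h1⟩
    filter_upwards [hfloor.eventually hQ] with r hr
    obtain ⟨hn3, hnf⟩ := hr
    set n : ℕ := ⌊ν * r⌋₊ with hn
    have hn0 : 0 < n := by omega
    have hnle : (n : ℝ) ≤ ν * r := Nat.floor_le (by positivity)
    have hnlt : ν * r < n + 1 := Nat.lt_floor_add_one _
    -- Gamma (ν r + 1) ≥ Gamma n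
    have h2n : (2:ℝ) ≤ (n:ℝ) := by exact_mod_cast by omega
    have hmono : Real.Gamma (n:ℝ) ≤ Real.Gamma (ν * r + 1) := by
      apply (Real.Gamma_strictMonoOn_Ici.monotoneOn) (Set.mem_Ici.mpr h2n)
        (Set.mem_Ici.mpr (by linarith)) (by linarith)
    -- Gamma n = (n-1)!
    have hGn : Real.Gamma (n:ℝ) = ((n-1).factorial : ℝ) := by
      have : ((n:ℕ):ℝ) = ((n-1:ℕ):ℝ) + 1 := by
        have : n - 1 + 1 = n := by omega
        rw [← this]; push_cast; ring
      rw [this, Real.Gamma_nat_eq_factorial]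
    -- (E^2)^(n-1) ≥ E^(n+1)
    have hpow : E ^ (n+1) ≤ (E^2)^(n-1) := by
      rw [← pow_mul]
      apply pow_le_pow_right₀ hE1
      omega
    -- E^(n+1) ≥ D^r
    have hDr : (D:ℝ) ^ r ≤ E ^ (n+1) := by
      have h1 : (D ^ (1/ν)) ^ (n+1) ≤ E ^ (n+1) :=
        pow_le_pow_left₀ (Real.rpow_nonneg (by linarith) _) (le_max_right _ _) _
      refine le_trans ?_ h1
      rw [← Real.rpow_natCast (D ^ (1/ν)) (n+1), ← Real.rpow_mul (by linarith : (0:ℝ) ≤ D)]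
      rw [← Real.rpow_natCast D r]
      apply Real.rpow_le_rpow_of_exponent_le hD1
      rw [div_mul_eq_mul_div, one_mul, le_div_iff₀ hν]
      push_cast
      linarith
    calc D ^ r ≤ E ^ (n+1) := hDr
      _ ≤ (E^2)^(n-1) := hpow
      _ ≤ ((n-1).factorial : ℝ) := hnf
      _ = Real.Gamma (n:ℝ) := hGn.symm
      _ ≤ Real.Gamma (ν * r + 1) := hmono
  -- conclude by comparison with geometric series
  apply Summable.of_norm_bounded_eventually (g := fun r : ℕ => (C / D) ^ r)
  · apply summable_geometric_of_lt_one (by positivity)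
    rw [div_lt_one (by rw [hD]; linarith)]
    rw [hD]; linarith
  · rw [Nat.cofinite_eq_atTop]
    filter_upwards [hgb] with r hr
    have hG0 : 0 < Real.Gamma (ν * r + 1) :=
      Real.Gamma_pos_of_pos (by positivity)
    rw [Real.norm_eq_abs, abs_div, abs_of_nonneg (by positivity), abs_of_pos hG0, div_pow]
    have hDpos : (0:ℝ) < D ^ r := by positivity
    gcongr

lemma ph_neg_abs (x : ℝ) (k : ℕ) : ph (-(|x|+1)) k = (-1)^k * php x k := by
  induction k with
  | zero => simp [ph_zero, php]
  | succ k ih =>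
    rw [ph_succ, php_succ, ih, pow_succ]
    ring

lemma hasSum_php (x : ℝ) {w : ℝ} (hw0 : 0 ≤ w) (hw1 : w < 1) :
    HasSum (fun k : ℕ => php x k / (k.factorial:ℝ) * w ^ k) ((1 - w) ^ (-(|x|+1))) := by
  have h := hasSum_binomial (-(|x|+1)) (y := -w) (by rwa [abs_neg, abs_of_nonneg hw0])
  have he : (1 + -w) = 1 - w := by ring
  rw [he] at h
  have hfe : (fun k : ℕ => php x k / (k.factorial:ℝ) * w ^ k)
      = (fun k : ℕ => ph (-(|x|+1)) k / (k.factorial:ℝ) * (-w) ^ k) := by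
    funext k
    rw [ph_neg_abs, neg_pow w k,
      show ((-1:ℝ)^k * php x k)/(k.factorial:ℝ) * ((-1:ℝ)^k * w^k)
        = ((-1:ℝ)^k*(-1:ℝ)^k) * (php x k/(k.factorial:ℝ) * w^k) from by ring,
      show ((-1:ℝ)^k*(-1:ℝ)^k) = 1 from by rw [← mul_pow]; norm_num, one_mul]
  rw [hfe]
  exact h

/-- The one-parameter Mittag-Leffler function. -/
noncomputable def mittagLeffler (ν x : ℝ) : ℝ := ∑' r : ℕ, x ^ r / Real.Gamma (ν * r + 1)

theorem space_time_fractional_poisson_coefficients (l α ν t : ℝ) (hl : 0 < l)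
    (hα : α ∈ Set.Ioc (0:ℝ) 1) (hν : ν ∈ Set.Ioc (0:ℝ) 1) (ht : 0 < t)
    (u : ℝ) (hu : |u| < 1) :
    mittagLeffler ν (-l ^ α * t ^ ν * (1 - u) ^ α) =
      ∑' k : ℕ, ((-1 : ℝ) ^ k / (k.factorial : ℝ) *
        ∑' r : ℕ, (-l ^ α * t ^ ν) ^ r / Real.Gamma (ν * r + 1) *
          (Real.Gamma (α * r + 1) / Real.Gamma (α * r + 1 - k))) * u ^ k := by
  obtain ⟨hα0, hα1⟩ := hα
  obtain ⟨hν0, hν1⟩ := hν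
  obtain ⟨hu1, hu2⟩ := abs_lt.mp hu
  set A : ℝ := -l ^ α * t ^ ν with hA
  set w : ℝ := 1 - u with hw
  have hw0 : 0 < w := by rw [hw]; linarith
  have hu0 : |u| < 1 := hu
  have h1u : 0 < 1 - |u| := by linarith [hu]
  -- Gamma positivity
  have hGν : ∀ r : ℕ, 0 < Real.Gamma (ν * r + 1) := fun r =>
    Real.Gamma_pos_of_pos (by positivity)
  have hGα : ∀ r : ℕ, 0 < Real.Gamma (α * r + 1) := fun r =>
    Real.Gamma_pos_of_pos (by positivity)
  -- the inner coefficients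
  set f : ℕ → ℕ → ℝ := fun r k =>
    A ^ r / Real.Gamma (ν * r + 1) * (ph (α * r) k / (k.factorial:ℝ) * (-u) ^ k) with hf
  -- row HasSum (binomial series)
  have HS : ∀ r : ℕ, HasSum (fun k : ℕ => ph (α * r) k / (k.factorial:ℝ) * (-u) ^ k)
      (w ^ (α * (r:ℝ))) := by
    intro r
    have h := hasSum_binomial (α * r) (y := -u) (by rwa [abs_neg])
    have he : (1 + -u) = w := by rw [hw]; ring
    rwa [he] at h
  -- majorant rows
  have HM : ∀ r : ℕ, HasSum (fun k : ℕ => php (α * r) k / (k.factorial:ℝ) * |u| ^ k)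
      ((1 - |u|) ^ (-(|α * (r:ℝ)|+1))) := fun r => hasSum_php _ (abs_nonneg u) hu
  -- pointwise norm bound
  have hnorm : ∀ r k : ℕ, ‖f r k‖ ≤ (|A| ^ r / Real.Gamma (ν * r + 1))
      * (php (α * r) k / (k.factorial:ℝ) * |u| ^ k) := by
    intro r k
    rw [hf]
    simp only [Real.norm_eq_abs, abs_mul, abs_div, abs_pow, Nat.abs_cast, abs_neg,
      abs_of_pos (hGν r)]
    apply mul_le_mul_of_nonneg_left _ (div_nonneg (by positivity) (hGν r).le)
    apply mul_le_mul_of_nonneg_right _ (by positivity)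
    exact div_le_div_of_nonneg_right (abs_ph_le _ _) (by positivity)
  -- row-sum bound sequence is summable
  have hrowsum : Summable (fun r : ℕ => (|A| ^ r / Real.Gamma (ν * r + 1))
      * (1 - |u|) ^ (-(|α * (r:ℝ)|+1))) := by
    have hC : 0 ≤ |A| * (1 - |u|) ^ (-α) := by positivity
    have hml := (summable_ml hν0 hC).mul_left ((1 - |u|) ^ (-1 : ℝ))
    apply hml.congr
    intro r
    have habs : |α * (r:ℝ)| = α * r := abs_of_nonneg (by positivity)
    have h3 : (1 - |u|) ^ ((-α) * (r:ℝ)) = ((1 - |u|) ^ (-α)) ^ r := by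
      rw [← Real.rpow_natCast ((1 - |u|) ^ (-α)) r, ← Real.rpow_mul h1u.le]
    rw [habs, show (-(α * (r:ℝ) + 1)) = (-α) * (r:ℝ) + (-1:ℝ) from by ring,
      Real.rpow_add h1u, h3, mul_pow]
    have hGne := (hGν r).ne'
    field_simp
  -- summability of the double family
  have hsumF : Summable (Function.uncurry f) := by
    apply Summable.of_norm
    rw [summable_prod_of_nonneg (fun p => norm_nonneg _)]
    constructor
    · intro r
      apply Summable.of_nonneg_of_le (fun k => norm_nonneg _) (hnorm r)
      exact ((HM r).mul_left _).summable
    · apply Summable.of_nonneg_of_le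
        (fun r => tsum_nonneg (fun k => norm_nonneg _)) _ hrowsum
      intro r
      have hle := Summable.tsum_le_tsum (hnorm r)
        (Summable.of_nonneg_of_le (fun k => norm_nonneg _) (hnorm r)
          ((HM r).mul_left _).summable)
        ((HM r).mul_left _).summable
      calc ∑' k : ℕ, ‖f r k‖
          ≤ ∑' k : ℕ, (|A| ^ r / Real.Gamma (ν * r + 1))
            * (php (α * r) k / (k.factorial:ℝ) * |u| ^ k) := hle
        _ = (|A| ^ r / Real.Gamma (ν * r + 1)) * (1 - |u|) ^ (-(|α * (r:ℝ)|+1)) :=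
            ((HM r).mul_left _).tsum_eq
  -- expand the Mittag-Leffler function as an iterated sum
  have hexp : mittagLeffler ν (A * w ^ α) = ∑' r : ℕ, ∑' k : ℕ, f r k := by
    rw [mittagLeffler]
    apply tsum_congr
    intro r
    have h1 : (A * w ^ α) ^ r = A ^ r * w ^ (α * (r:ℝ)) := by
      rw [mul_pow, ← Real.rpow_natCast (w ^ α) r, ← Real.rpow_mul hw0.le]
    have h2 := ((HS r).mul_left (A ^ r / Real.Gamma (ν * r + 1))).tsum_eq
    rw [h1, show A ^ r * w ^ (α * (r:ℝ)) / Real.Gamma (ν * r + 1)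
      = A ^ r / Real.Gamma (ν * r + 1) * w ^ (α * (r:ℝ)) from by ring, ← h2]
  -- swap the two sums
  have hswap : ∑' r : ℕ, ∑' k : ℕ, f r k = ∑' k : ℕ, ∑' r : ℕ, f r k :=
    (Summable.tsum_comm hsumF).symm
  rw [show mittagLeffler ν (-l ^ α * t ^ ν * (1 - u) ^ α) = mittagLeffler ν (A * w ^ α) from rfl,
    hexp, hswap]
  -- identify each coefficient
  apply tsum_congr
  intro k
  have hgr : ∀ r : ℕ, Real.Gamma (α * r + 1) / Real.Gamma (α * r + 1 - k) = ph (α * r) k :=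
    fun r => gamma_ratio (hGα r).ne' k
  have hstep : ∀ r : ℕ, f r k
      = (A ^ r / Real.Gamma (ν * r + 1) * (Real.Gamma (α * r + 1) / Real.Gamma (α * r + 1 - k)))
        * ((-1:ℝ) ^ k * u ^ k / (k.factorial:ℝ)) := by
    intro r
    simp only [hf, hgr r]
    rw [neg_pow u k]
    field_simp
  calc ∑' r : ℕ, f r k
      = ∑' r : ℕ, (A ^ r / Real.Gamma (ν * r + 1)
          * (Real.Gamma (α * r + 1) / Real.Gamma (α * r + 1 - k)))
          * ((-1:ℝ) ^ k * u ^ k / (k.factorial:ℝ)) := tsum_congr hstep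
    _ = (∑' r : ℕ, A ^ r / Real.Gamma (ν * r + 1)
          * (Real.Gamma (α * r + 1) / Real.Gamma (α * r + 1 - k)))
          * ((-1:ℝ) ^ k * u ^ k / (k.factorial:ℝ)) := tsum_mul_right
    _ = ((-1:ℝ) ^ k / (k.factorial:ℝ) *
          ∑' r : ℕ, A ^ r / Real.Gamma (ν * r + 1)
          * (Real.Gamma (α * r + 1) / Real.Gamma (α * r + 1 - k))) * u ^ k := by ring
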